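/- Let α > 0 and let I ⊆ ℝ be an open interval. If f has an indefinite MC^α integral on I, then there exists a nondegenerate compact subinterval [u,v] ⊆ I on which f is Lebesgue integrable. -/

import Mathlib

open Filter Set Topology MeasureTheory

/-- `φ` is an `α`-control function for the pair `(F, f)` on the interval `I`:
`φ` is strictly increasing on `I` and for every `x ∈ I`,
`(F y - F x - f x (y - x)) / (φ (x + α (y - x)) - φ x) → 0` as `y → x` within `I \ {x}`. -/
def IsControlFn (α : ℝ) (I : Set ℝ) (F f φ : ℝ → ℝ) : Prop :=
  StrictMonoOn φ I ∧ ∀ x ∈ I,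
    Tendsto (fun y => (F y - F x - f x * (y - x)) / (φ (x + α * (y - x)) - φ x))
      (𝓝[I \ {x}] x) (𝓝 0)

/-- `F` is an indefinite `MC^α` integral of `f` on `I`. -/
def IsMCIntegral (α : ℝ) (I : Set ℝ) (F f : ℝ → ℝ) : Prop :=
  ∃ φ : ℝ → ℝ, IsControlFn α I F f φ

section Aux

variable {α : ℝ} {I : Set ℝ} {F f φ : ℝ → ℝ}

/-- From the control condition: eventually the numerator is bounded by `ε` times the absolute
value of the denominator. -/
lemma control_abs_le (hα : 0 < α) (hIopen : IsOpen I) (h : IsControlFn α I F f φ)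
    {x : ℝ} (hx : x ∈ I) {ε : ℝ} (hε : 0 < ε) :
    ∀ᶠ y in 𝓝[I \ {x}] x,
      |F y - F x - f x * (y - x)| ≤ ε * |φ (x + α * (y - x)) - φ x| := by
  have hev1 := Metric.tendsto_nhds.1 (h.2 x hx) ε hε
  have hmap : Tendsto (fun y : ℝ => x + α * (y - x)) (𝓝 x) (𝓝 x) := by
    have hc : Continuous fun y : ℝ => x + α * (y - x) :=
      continuous_const.add (continuous_const.mul (continuous_id.sub continuous_const))
    have := hc.tendsto x
    simpa using this
  have hev2 : ∀ᶠ y in 𝓝[I \ {x}] x, x + α * (y - x) ∈ I :=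
    (hmap.mono_left nhdsWithin_le_nhds).eventually (hIopen.mem_nhds hx)
  filter_upwards [hev1, hev2, self_mem_nhdsWithin] with y h1 h2 hy
  have hyx : y ≠ x := hy.2
  have hden : φ (x + α * (y - x)) - φ x ≠ 0 := by
    rcases lt_or_gt_of_ne hyx with hlt | hgt
    · have h5 : α * (y - x) < 0 := mul_neg_of_pos_of_neg hα (by linarith)
      exact sub_ne_zero.2 (ne_of_lt (h.1 h2 hx (by linarith)))
    · have h5 : 0 < α * (y - x) := mul_pos hα (by linarith)
      exact sub_ne_zero.2 (ne_of_gt (h.1 hx h2 (by linarith)))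
  rw [Real.dist_eq, sub_zero] at h1
  have heq : F y - F x - f x * (y - x) =
      (F y - F x - f x * (y - x)) / (φ (x + α * (y - x)) - φ x) *
        (φ (x + α * (y - x)) - φ x) := (div_mul_cancel₀ _ hden).symm
  rw [heq, abs_mul]
  exact mul_le_mul_of_nonneg_right h1.le (abs_nonneg _)

/-- `F` is continuous at each point of `I`. -/
lemma control_continuousAt (hα : 0 < α) (hIopen : IsOpen I) (h : IsControlFn α I F f φ)
    {x : ℝ} (hx : x ∈ I) : ContinuousAt F x := by
  obtain ⟨ε, hε, hball⟩ := Metric.isOpen_iff.1 hIopen x hx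
  obtain ⟨r, hrdef⟩ : ∃ t : ℝ, t = ε / 2 := ⟨_, rfl⟩
  have hrpos : 0 < r := by rw [hrdef]; positivity
  have hrε : r < ε := by rw [hrdef]; linarith
  have hsub : Metric.closedBall x r ⊆ I :=
    (Metric.closedBall_subset_ball hrε).trans hball
  have hxmr : x - r ∈ I := by
    apply hsub
    rw [Metric.mem_closedBall, Real.dist_eq]
    rw [abs_le]; constructor <;> linarith
  have hxpr : x + r ∈ I := by
    apply hsub
    rw [Metric.mem_closedBall, Real.dist_eq]
    rw [abs_le]; constructor <;> linarith
  have hzball : ∀ y : ℝ, |y - x| ≤ r / (1 + α) → |α * (y - x)| ≤ r := by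
    intro y hy
    rw [abs_mul, abs_of_pos hα]
    have h1 : α / (1 + α) ≤ 1 := by rw [div_le_one (by linarith)]; linarith
    calc α * |y - x| ≤ α * (r / (1 + α)) := mul_le_mul_of_nonneg_left hy hα.le
      _ = (α / (1 + α)) * r := by ring
      _ ≤ 1 * r := mul_le_mul_of_nonneg_right h1 hrpos.le
      _ = r := one_mul r
  have hzI : ∀ y : ℝ, |y - x| ≤ r / (1 + α) → x + α * (y - x) ∈ I := by
    intro y hy
    apply hsub
    rw [Metric.mem_closedBall, Real.dist_eq,
      show x + α * (y - x) - x = α * (y - x) by ring]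
    exact hzball y hy
  obtain ⟨D, hDdef⟩ : ∃ t : ℝ, t = φ (x + r) - φ (x - r) := ⟨_, rfl⟩
  have hD0 : 0 ≤ D := by
    rw [hDdef]
    exact sub_nonneg.2 ((h.1.monotoneOn) hxmr hxpr (by linarith))
  have hmemD : ∀ y : ℝ, |y - x| ≤ r / (1 + α) →
      |φ (x + α * (y - x)) - φ x| ≤ D := by
    intro y hy
    have hz := abs_le.1 (hzball y hy)
    have hb1 : φ (x - r) ≤ φ (x + α * (y - x)) :=
      h.1.monotoneOn hxmr (hzI y hy) (by linarith [hz.1])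
    have hb2 : φ (x + α * (y - x)) ≤ φ (x + r) :=
      h.1.monotoneOn (hzI y hy) hxpr (by linarith [hz.2])
    have hb3 : φ (x - r) ≤ φ x := h.1.monotoneOn hxmr hx (by linarith)
    have hb4 : φ x ≤ φ (x + r) := h.1.monotoneOn hx hxpr (by linarith)
    rw [abs_le]
    constructor <;> [rw [hDdef]; rw [hDdef]] <;> linarith
  have hnum : Tendsto (fun y => F y - F x - f x * (y - x)) (𝓝[I \ {x}] x) (𝓝 0) := by
    apply squeeze_zero_norm'
      (a := fun y => |(F y - F x - f x * (y - x)) / (φ (x + α * (y - x)) - φ x)| * D)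
    · have hev : ∀ᶠ y in 𝓝[I \ {x}] x, |y - x| ≤ r / (1 + α) := by
        apply Eventually.filter_mono nhdsWithin_le_nhds
        have hmem' : Metric.closedBall x (r / (1 + α)) ∈ 𝓝 x :=
          Metric.closedBall_mem_nhds x (by positivity)
        filter_upwards [hmem'] with y hy
        rwa [Metric.mem_closedBall, Real.dist_eq] at hy
      filter_upwards [hev, self_mem_nhdsWithin] with y h1 hy
      have hyx : y ≠ x := hy.2
      have hden : φ (x + α * (y - x)) - φ x ≠ 0 := by
        rcases lt_or_gt_of_ne hyx with hlt | hgt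
        · have h5 : α * (y - x) < 0 := mul_neg_of_pos_of_neg hα (by linarith)
          exact sub_ne_zero.2 (ne_of_lt (h.1 (hzI y h1) hx (by linarith)))
        · have h5 : 0 < α * (y - x) := mul_pos hα (by linarith)
          exact sub_ne_zero.2 (ne_of_gt (h.1 hx (hzI y h1) (by linarith)))
      have heq : |F y - F x - f x * (y - x)| =
          |(F y - F x - f x * (y - x)) / (φ (x + α * (y - x)) - φ x)| *
            |φ (x + α * (y - x)) - φ x| := by
        rw [abs_div, div_mul_cancel₀ _ (abs_ne_zero.2 hden)]
      rw [Real.norm_eq_abs, heq]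
      exact mul_le_mul_of_nonneg_left (hmemD y h1) (abs_nonneg _)
    · have := ((h.2 x hx).abs).mul_const D
      simpa using this
  have hlin : Tendsto (fun y => f x * (y - x)) (𝓝[I \ {x}] x) (𝓝 0) := by
    apply Tendsto.mono_left _ nhdsWithin_le_nhds
    have hc : Continuous fun y : ℝ => f x * (y - x) :=
      continuous_const.mul (continuous_id.sub continuous_const)
    have := hc.tendsto x
    simpa using this
  have hF : Tendsto F (𝓝[I \ {x}] x) (𝓝 (F x)) := by
    have hadd := hnum.add hlin
    simp only [add_zero] at hadd
    have heq : ∀ y, F y - F x - f x * (y - x) + f x * (y - x) = F y - F x := by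
      intro y; ring
    simp only [heq] at hadd
    have := hadd.add (tendsto_const_nhds (x := F x))
    simp only [zero_add, sub_add_cancel] at this
    exact this
  have hws : 𝓝[I \ {x}] x = 𝓝[≠] x := by
    rw [diff_eq, nhdsWithin_inter, hIopen.nhdsWithin_eq hx]
    exact inf_eq_right.2 nhdsWithin_le_nhds
  have : Tendsto F (𝓝[≠] x ⊔ pure x) (𝓝 (F x)) := by
    rw [tendsto_sup]
    exact ⟨hws ▸ hF, tendsto_pure_nhds F x⟩
  rwa [nhdsNE_sup_pure] at this

end Aux

set_option maxHeartbeats 2000000 in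
/-- If `f` is `MC^α` integrable on an open interval `I`, then `f` is Lebesgue
integrable on some nondegenerate compact subinterval of `I`. -/
theorem stmt_12 (α : ℝ) (hα : 0 < α) (I : Set ℝ) (hIopen : IsOpen I)
    (hIconn : I.OrdConnected) (hIne : I.Nonempty) (f : ℝ → ℝ)
    (hf : ∃ F : ℝ → ℝ, IsMCIntegral α I F f) :
    ∃ u v : ℝ, u < v ∧ Set.Icc u v ⊆ I ∧
      MeasureTheory.IntegrableOn f (Set.Icc u v) := by
  obtain ⟨F, φ, hctrl⟩ := hf
  obtain ⟨x0, hx0⟩ := hIne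
  obtain ⟨ε0, hε0, hball⟩ := Metric.isOpen_iff.1 hIopen x0 hx0
  obtain ⟨a, ha⟩ : ∃ t : ℝ, t = x0 - ε0 / 2 := ⟨_, rfl⟩
  obtain ⟨b, hb⟩ : ∃ t : ℝ, t = x0 + ε0 / 2 := ⟨_, rfl⟩
  have hab : a < b := by rw [ha, hb]; linarith
  have hIcc : Icc a b ⊆ I := by
    intro y hy
    rw [mem_Icc, ha, hb] at hy
    apply hball
    rw [Metric.mem_ball, Real.dist_eq, abs_lt]
    constructor <;> linarith [hy.1, hy.2]
  obtain ⟨a', ha'⟩ : ∃ t : ℝ, t = x0 - ε0 / 4 := ⟨_, rfl⟩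
  obtain ⟨b', hb'⟩ : ∃ t : ℝ, t = x0 + ε0 / 4 := ⟨_, rfl⟩
  have ha'b' : a' < b' := by rw [ha', hb']; linarith
  have hsub' : Icc a' b' ⊆ Icc a b := by
    intro y hy
    rw [mem_Icc, ha', hb'] at hy
    rw [mem_Icc, ha, hb]
    constructor <;> linarith [hy.1, hy.2]
  obtain ⟨δ0, hδ0def⟩ : ∃ t : ℝ, t = ε0 / 4 / (1 + α) := ⟨_, rfl⟩
  have hδ0 : 0 < δ0 := by rw [hδ0def]; positivity
  have hδ0le : δ0 ≤ ε0 / 4 := by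
    rw [hδ0def, div_le_iff₀ (by linarith)]
    nlinarith
  have hαδ0 : α * δ0 ≤ ε0 / 4 := by
    rw [hδ0def, mul_div_assoc', div_le_iff₀ (by linarith)]
    nlinarith
  -- membership facts
  have hmem : ∀ x ∈ Icc a' b', ∀ y : ℝ, |y - x| ≤ δ0 →
      y ∈ Icc a b ∧ x + α * (y - x) ∈ Icc a b := by
    intro x hx y hy
    rw [mem_Icc, ha', hb'] at hx
    have hy' := abs_le.1 hy
    constructor
    · rw [mem_Icc, ha, hb]
      constructor <;> linarith [hy'.1, hy'.2, hx.1, hx.2]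
    · have habs : |α * (y - x)| ≤ ε0 / 4 := by
        rw [abs_mul, abs_of_pos hα]
        calc α * |y - x| ≤ α * δ0 := mul_le_mul_of_nonneg_left hy hα.le
          _ ≤ ε0 / 4 := hαδ0
      have h2 := abs_le.1 habs
      rw [mem_Icc, ha, hb]
      constructor <;> linarith [h2.1, h2.2, hx.1, hx.2]
  -- the clamped control function
  obtain ⟨ψ, hψdef⟩ : ∃ q : ℝ → ℝ, q = fun t => φ (max a (min b t)) := ⟨_, rfl⟩
  have hclampmem : ∀ t : ℝ, max a (min b t) ∈ Icc a b :=
    fun t => ⟨le_max_left _ _, max_le hab.le (min_le_left _ _)⟩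
  have hψeq : ∀ t ∈ Icc a b, ψ t = φ t := by
    intro t ht
    simp only [hψdef]
    rw [min_eq_right ht.2, max_eq_right ht.1]
  have hψmono : Monotone ψ := by
    intro s t hst
    simp only [hψdef]
    exact hctrl.1.monotoneOn (hIcc (hclampmem s)) (hIcc (hclampmem t))
      (max_le_max le_rfl (min_le_min le_rfl hst))
  obtain ⟨D0, hD0def⟩ : ∃ t : ℝ, t = φ b - φ a := ⟨_, rfl⟩
  have hD0 : 0 ≤ D0 := by
    rw [hD0def]
    exact sub_nonneg.2
      (hctrl.1.monotoneOn (hIcc ⟨le_rfl, hab.le⟩) (hIcc ⟨hab.le, le_rfl⟩) hab.le)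
  have hψbdd : ∀ s t : ℝ, |ψ s - ψ t| ≤ D0 := by
    intro s t
    have h1 : ∀ w : ℝ, φ a ≤ ψ w ∧ ψ w ≤ φ b := by
      intro w
      simp only [hψdef]
      exact ⟨hctrl.1.monotoneOn (hIcc ⟨le_rfl, hab.le⟩) (hIcc (hclampmem w)) (hclampmem w).1,
        hctrl.1.monotoneOn (hIcc (hclampmem w)) (hIcc ⟨hab.le, le_rfl⟩) (hclampmem w).2⟩
    have hs := h1 s; have ht := h1 t
    rw [abs_le]
    constructor <;> [rw [hD0def]; rw [hD0def]] <;> linarith [hs.1, hs.2, ht.1, ht.2]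
  -- bound for F on Icc a b
  have hFcont : ContinuousOn F (Icc a b) := fun x hx =>
    (control_continuousAt hα hIopen hctrl (hIcc hx)).continuousWithinAt
  obtain ⟨M, hM⟩ := isCompact_Icc.exists_bound_of_continuousOn hFcont
  have hM0 : 0 ≤ M := le_trans (norm_nonneg (F a)) (hM a ⟨le_rfl, hab.le⟩)
  -- the sets for the Baire category argument
  obtain ⟨A, hAdef⟩ : ∃ q : ℕ → Set ℝ, q = fun (n : ℕ) =>
      {x | x ∈ Icc a' b' ∧ ∀ y : ℝ, |y - x| ≤ δ0 → |y - x| ≤ 1 / ((n : ℝ) + 1) →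
        |F y - F x - f x * (y - x)| ≤ |ψ (x + α * (y - x)) - ψ x|} := ⟨_, rfl⟩
  have hAmem : ∀ (n : ℕ) (x : ℝ), x ∈ A n ↔ (x ∈ Icc a' b' ∧
      ∀ y : ℝ, |y - x| ≤ δ0 → |y - x| ≤ 1 / (n + 1 : ℝ) →
        |F y - F x - f x * (y - x)| ≤ |ψ (x + α * (y - x)) - ψ x|) := by
    intro n x
    simp only [hAdef, mem_setOf_eq]
  have hcover : ∀ x ∈ Icc a' b', ∃ n : ℕ, x ∈ A n := by
    intro x hx
    have hxI : x ∈ I := hIcc (hsub' hx)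
    have hev := control_abs_le hα hIopen hctrl hxI one_pos
    rw [eventually_iff, Metric.mem_nhdsWithin_iff] at hev
    obtain ⟨δ, hδ, hsubδ⟩ := hev
    obtain ⟨n, hn⟩ := exists_nat_one_div_lt hδ
    refine ⟨n, (hAmem n x).2 ⟨hx, fun y h1 h2 => ?_⟩⟩
    by_cases hyx : y = x
    · simp [hyx]
    · have hymem := hmem x hx y h1
      have hyI : y ∈ I := hIcc hymem.1
      have hball' : y ∈ Metric.ball x δ := by
        rw [Metric.mem_ball, Real.dist_eq]
        exact lt_of_le_of_lt h2 hn
      have := hsubδ ⟨hball', hyI, hyx⟩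
      simp only [mem_setOf_eq, one_mul] at this
      rwa [hψeq _ hymem.2, hψeq _ (hsub' hx)]
  -- Baire category: some closure (A n) contains a relative ball
  have hbaire : ∃ n : ℕ, ∃ x1 ∈ Icc a' b', ∃ ε1 > 0,
      ∀ y ∈ Icc a' b', |y - x1| < ε1 → y ∈ closure (A n) := by
    haveI : CompleteSpace (Icc a' b') := (isClosed_Icc.isComplete).completeSpace_coe
    haveI : Nonempty (Icc a' b') := (nonempty_Icc.2 ha'b'.le).to_subtype
    obtain ⟨n, hn⟩ := nonempty_interior_of_iUnion_of_closed
      (X := Icc a' b') (f := fun n : ℕ => (Subtype.val) ⁻¹' closure (A n))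
      (fun n => isClosed_closure.preimage continuous_subtype_val)
      (by
        ext ⟨x, hx⟩
        simp only [mem_iUnion, mem_preimage, mem_univ, iff_true]
        obtain ⟨n, hn⟩ := hcover x hx
        exact ⟨n, subset_closure hn⟩)
    obtain ⟨⟨x1, hx1⟩, hxint⟩ := hn
    rw [mem_interior_iff_mem_nhds, nhds_subtype_eq_comap, Filter.mem_comap] at hxint
    obtain ⟨t, ht, hts⟩ := hxint
    obtain ⟨ε1, hε1, hball1⟩ := Metric.mem_nhds_iff.1 ht
    refine ⟨n, x1, hx1, ε1, hε1, fun y hy hyx => ?_⟩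
    have hyt : y ∈ Metric.ball x1 ε1 := by rw [Metric.mem_ball, Real.dist_eq]; exact hyx
    exact hts (show (⟨y, hy⟩ : Icc a' b') ∈ Subtype.val ⁻¹' t from hball1 hyt)
  obtain ⟨n, x1, hx1, ε1, hε1, hdense⟩ := hbaire
  rw [mem_Icc] at hx1
  obtain ⟨c, hcdef⟩ : ∃ t : ℝ, t = min δ0 (1 / (n + 1 : ℝ)) := ⟨_, rfl⟩
  have hcpos : 0 < c := by rw [hcdef]; exact lt_min hδ0 (by positivity)
  have hcδ0 : c ≤ δ0 := by rw [hcdef]; exact min_le_left _ _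
  have hcn : c ≤ 1 / (n + 1 : ℝ) := by rw [hcdef]; exact min_le_right _ _
  obtain ⟨ρ, hρdef⟩ : ∃ t : ℝ, t = min (ε1 / 2) (c / 2) := ⟨_, rfl⟩
  have hρpos : 0 < ρ := by rw [hρdef]; exact lt_min (by linarith) (by linarith)
  have hρε1 : ρ ≤ ε1 / 2 := by rw [hρdef]; exact min_le_left _ _
  have hρc : ρ ≤ c / 2 := by rw [hρdef]; exact min_le_right _ _
  obtain ⟨u, hudef⟩ : ∃ t : ℝ, t = max a' (x1 - ρ) := ⟨_, rfl⟩
  obtain ⟨v, hvdef⟩ : ∃ t : ℝ, t = min b' (x1 + ρ) := ⟨_, rfl⟩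
  have huv : u < v := by
    rw [hudef, hvdef]
    exact max_lt (lt_min ha'b' (by linarith [hx1.1]))
      (lt_min (by linarith [hx1.2]) (by linarith))
  have hu1 : a' ≤ u := by rw [hudef]; exact le_max_left _ _
  have hu2 : x1 - ρ ≤ u := by rw [hudef]; exact le_max_right _ _
  have hv1 : v ≤ b' := by rw [hvdef]; exact min_le_left _ _
  have hv2 : v ≤ x1 + ρ := by rw [hvdef]; exact min_le_right _ _
  have hUV1 : Icc u v ⊆ Icc a' b' := fun y hy => ⟨le_trans hu1 hy.1, le_trans hy.2 hv1⟩
  have hUV2 : Icc u v ⊆ Icc a b := hUV1.trans hsub'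
  have hvu : v - u ≤ c := by linarith
  have hclosure : Icc u v ⊆ closure (A n) := by
    intro y hy
    rw [mem_Icc] at hy
    apply hdense y (hUV1 hy)
    rw [abs_lt]
    exact ⟨by linarith [hy.1], by linarith [hy.2]⟩
  obtain ⟨C, hCdef⟩ : ∃ t : ℝ, t = (2 * M + D0) / ((v - u) / 2) := ⟨_, rfl⟩
  have hC0 : 0 ≤ C := by
    rw [hCdef]
    exact div_nonneg (by linarith) (by linarith)
  -- bound for f on A n ∩ Icc u v
  have hfC : ∀ x ∈ A n ∩ Icc u v, |f x| ≤ C := by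
    rintro x ⟨hxA, hxuv⟩
    rw [hAmem] at hxA
    rw [mem_Icc] at hxuv
    obtain ⟨y, hydef⟩ : ∃ t : ℝ, t = if x ≤ (u + v) / 2 then v else u := ⟨_, rfl⟩
    have hy1 : y ∈ Icc u v := by
      rw [hydef]; split_ifs
      · exact right_mem_Icc.2 huv.le
      · exact left_mem_Icc.2 huv.le
    have hy2 : (v - u) / 2 ≤ |y - x| := by
      rw [hydef]; split_ifs with h
      · rw [abs_of_nonneg (by linarith [hxuv.2])]; linarith
      · push_neg at h
        rw [abs_of_nonpos (by linarith [hxuv.1])]; linarith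
    rw [mem_Icc] at hy1
    have hy3 : |y - x| ≤ v - u :=
      abs_le.2 ⟨by linarith [hy1.1, hxuv.2], by linarith [hy1.2, hxuv.1]⟩
    have h4 := hxA.2 y (hy3.trans (hvu.trans hcδ0)) (hy3.trans (hvu.trans hcn))
    have hFy : |F y| ≤ M := by
      have := hM y (hUV2 hy1); rwa [Real.norm_eq_abs] at this
    have hFx : |F x| ≤ M := by
      have := hM x (hUV2 hxuv); rwa [Real.norm_eq_abs] at this
    have t1 : |F y - F x - f x * (y - x)| ≤ D0 := h4.trans (hψbdd _ _)
    have t2 : |F y - F x| ≤ |F y| + |F x| := abs_sub _ _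
    have t3 : |f x * (y - x)| ≤ |F y - F x| + |F y - F x - f x * (y - x)| := by
      have h5 := abs_sub (F y - F x) (F y - F x - f x * (y - x))
      have e1 : F y - F x - (F y - F x - f x * (y - x)) = f x * (y - x) := by ring
      rwa [e1] at h5
    have t4 : |f x| * ((v - u) / 2) ≤ 2 * M + D0 := by
      have := mul_le_mul_of_nonneg_left hy2 (abs_nonneg (f x))
      rw [← abs_mul] at this
      linarith
    rw [hCdef, le_div_iff₀ (by linarith : (0:ℝ) < (v - u) / 2)]
    exact t4
  -- the a.e. derivative of ψ
  obtain ⟨g, hgdef⟩ : ∃ q : ℝ → ℝ,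
      q = fun t => (Measure.rnDeriv hψmono.stieltjesFunction.measure volume t).toReal :=
    ⟨_, rfl⟩
  have hgae : ∀ᵐ t, HasDerivAt ψ (g t) t := by
    filter_upwards [hψmono.ae_hasDerivAt] with t ht
    simp only [hgdef]
    exact ht
  have hg0 : ∀ t, 0 ≤ g t := by
    intro t; simp only [hgdef]; exact ENNReal.toReal_nonneg
  -- little-o facts for ψ at a differentiability point
  have hψo : ∀ x : ℝ, HasDerivAt ψ (g x) x → ∀ ε' > (0:ℝ),
      ∀ᶠ z in 𝓝 x, |ψ z - ψ x - (z - x) * g x| ≤ ε' * |z - x| := by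
    intro x hdψ ε' hε'
    have := (hasDerivAt_iff_isLittleO.1 hdψ).def hε'
    filter_upwards [this] with z hz
    simpa [Real.norm_eq_abs, smul_eq_mul] using hz
  -- the key pointwise estimate
  have hkey : ∀ x ∈ Ioo u v, HasDerivAt ψ (g x) x →
      HasDerivAt F (f x) x ∧ |f x| ≤ C + α * g x := by
    intro x hxuv hdψ
    have hxu : u < x := hxuv.1
    have hxv : x < v := hxuv.2
    have hxA' : x ∈ Icc a' b' := hUV1 (Ioo_subset_Icc_self hxuv)
    have hxab : x ∈ Icc a b := hsub' hxA'
    have hxI : x ∈ I := hIcc hxab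
    -- part (i): F has derivative f x at x
    have hderivF : HasDerivAt F (f x) x := by
      rw [hasDerivAt_iff_isLittleO, Asymptotics.isLittleO_iff]
      intro cc hcc
      obtain ⟨K, hKdef⟩ : ∃ t : ℝ, t = α * g x + 1 := ⟨_, rfl⟩
      have hKpos : 0 < K := by
        rw [hKdef]
        have h6 := mul_nonneg hα.le (hg0 x)
        linarith only [h6]
      have hctrl' := control_abs_le hα hIopen hctrl hxI (div_pos hcc hKpos)
      rw [eventually_nhdsWithin_iff] at hctrl'
      have hψo' := hψo x hdψ (1 / α) (by positivity)
      have hmap : Tendsto (fun y : ℝ => x + α * (y - x)) (𝓝 x) (𝓝 x) := by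
        have hc : Continuous fun y : ℝ => x + α * (y - x) :=
          continuous_const.add (continuous_const.mul (continuous_id.sub continuous_const))
        have := hc.tendsto x
        simpa using this
      have hψo'' := hmap.eventually hψo'
      have hnear : ∀ᶠ y in 𝓝 x, |y - x| ≤ δ0 := by
        filter_upwards [Metric.closedBall_mem_nhds x hδ0] with y hy
        rwa [Metric.mem_closedBall, Real.dist_eq] at hy
      have hIev : ∀ᶠ y in 𝓝 x, y ∈ I := hIopen.mem_nhds hxI
      filter_upwards [hctrl', hψo'', hnear, hIev] with y h1 h2 h3 h4
      by_cases hyx : y = x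
      · simp [hyx]
      · have h1' := h1 ⟨h4, hyx⟩
        have hzmem : x + α * (y - x) ∈ Icc a b := (hmem x hxA' y h3).2
        rw [← hψeq _ hzmem, ← hψeq _ hxab] at h1'
        have h2' : |ψ (x + α * (y - x)) - ψ x| ≤ K * |y - x| := by
          rw [show x + α * (y - x) - x = α * (y - x) by ring] at h2
          rw [abs_mul, abs_of_pos hα] at h2
          have hh : (1 / α) * (α * |y - x|) = |y - x| := by field_simp
          rw [hh] at h2
          have habs1 : |ψ (x + α * (y - x)) - ψ x| ≤
              |ψ (x + α * (y - x)) - ψ x - α * (y - x) * g x| + |α * (y - x) * g x| := by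
            have := abs_add_le (ψ (x + α * (y - x)) - ψ x - α * (y - x) * g x)
              (α * (y - x) * g x)
            simpa using this
          have habs2 : |α * (y - x) * g x| = α * |y - x| * g x := by
            rw [abs_mul, abs_mul, abs_of_pos hα, abs_of_nonneg (hg0 x)]
          rw [hKdef]
          have hexp : (α * g x + 1) * |y - x| = α * |y - x| * g x + |y - x| := by ring
          linarith only [habs1, h2, habs2, hexp]
        have hfinal : |F y - F x - f x * (y - x)| ≤ cc * |y - x| := by
          have hmul := h1'.trans
            (mul_le_mul_of_nonneg_left h2' (div_pos hcc hKpos).le)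
          have hh : cc / K * (K * |y - x|) = cc * |y - x| := by
            field_simp
          rwa [hh] at hmul
        rw [Real.norm_eq_abs, Real.norm_eq_abs, smul_eq_mul, mul_comm (y - x) (f x)]
        exact hfinal
    refine ⟨hderivF, ?_⟩
    -- part (ii): |f x| ≤ C + α * g x
    by_cases hxAn : x ∈ A n
    · have h6 := hfC x ⟨hxAn, Ioo_subset_Icc_self hxuv⟩
      have h7 := mul_nonneg hα.le (hg0 x)
      linarith only [h6, h7]
    apply le_of_forall_pos_le_add
    intro ε hε
    obtain ⟨ε', hε'def⟩ : ∃ t : ℝ, t = ε / (3 + α) := ⟨_, rfl⟩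
    have hε'pos : 0 < ε' := by rw [hε'def]; positivity
    have hFo : ∀ᶠ z in 𝓝 x, |F z - F x - f x * (z - x)| ≤ ε' * |z - x| := by
      have := (hasDerivAt_iff_isLittleO.1 hderivF).def hε'pos
      filter_upwards [this] with z hz
      rw [Real.norm_eq_abs, Real.norm_eq_abs, smul_eq_mul, mul_comm (z - x) (f x)] at hz
      exact hz
    have hall := hFo.and (hψo x hdψ ε' hε'pos)
    rw [Metric.eventually_nhds_iff] at hall
    obtain ⟨δ, hδpos, hδball⟩ := hall
    obtain ⟨ρ2, hρ2def⟩ : ∃ t : ℝ, t = min (δ / (1 + α)) (min (x - u) (v - x)) := ⟨_, rfl⟩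
    have hρ2pos : 0 < ρ2 := by
      rw [hρ2def]
      exact lt_min (by positivity) (lt_min (by linarith) (by linarith))
    have hρ2a : ρ2 ≤ δ / (1 + α) := by rw [hρ2def]; exact min_le_left _ _
    have hρ2b : ρ2 ≤ x - u := by
      rw [hρ2def]; exact (min_le_right _ _).trans (min_le_left _ _)
    have hρ2c : ρ2 ≤ v - x := by
      rw [hρ2def]; exact (min_le_right _ _).trans (min_le_right _ _)
    have hxcl : x ∈ closure (A n) := hclosure (Ioo_subset_Icc_self hxuv)
    rw [Metric.mem_closure_iff] at hxcl
    obtain ⟨y, hyA, hyd⟩ := hxcl ρ2 hρ2pos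
    rw [Real.dist_eq] at hyd
    have hyx : y ≠ x := fun h => hxAn (h ▸ hyA)
    have hxyabs : |x - y| < ρ2 := hyd
    have hxypos : 0 < |x - y| := abs_pos.2 (sub_ne_zero.2 fun h => hyx h.symm)
    have hyuv : y ∈ Ioo u v := by
      have h1' := abs_lt.1 (lt_of_lt_of_le hxyabs hρ2b)
      have h2' := abs_lt.1 (lt_of_lt_of_le hxyabs hρ2c)
      exact ⟨by linarith [h1'.2], by linarith [h2'.1]⟩
    have hxyle : |x - y| ≤ v - u :=
      abs_le.2 ⟨by linarith [hyuv.2], by linarith [hyuv.1]⟩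
    have h4 := ((hAmem n y).1 hyA).2 x (hxyle.trans (hvu.trans hcδ0))
      (hxyle.trans (hvu.trans hcn))
    have hfyC : |f y| ≤ C := hfC y ⟨hyA, Ioo_subset_Icc_self hyuv⟩
    have hδ1 : |x - y| < δ / (1 + α) := lt_of_lt_of_le hxyabs hρ2a
    have hδα : δ / (1 + α) ≤ δ := by
      rw [div_le_iff₀ (by linarith : (0:ℝ) < 1 + α)]
      have h6 := mul_nonneg hδpos.le hα.le
      have hexp : δ * (1 + α) = δ + δ * α := by ring
      linarith only [h6, hexp]
    have hz1 := hδball (y := y) (by rw [Real.dist_eq, abs_sub_comm]; linarith)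
    have hz2 := hδball (y := y + α * (x - y)) (by
      rw [Real.dist_eq]
      have he : y + α * (x - y) - x = (1 - α) * (y - x) := by ring
      rw [he, abs_mul, abs_sub_comm y x]
      have h1' : |1 - α| ≤ 1 + α := abs_le.2 ⟨by linarith, by linarith⟩
      calc |1 - α| * |x - y| ≤ (1 + α) * |x - y| :=
            mul_le_mul_of_nonneg_right h1' (abs_nonneg _)
        _ < (1 + α) * (δ / (1 + α)) := mul_lt_mul_of_pos_left hδ1 (by linarith)
        _ = δ := by field_simp)
    -- key estimates
    have key1 : |F y - F x - f x * (y - x)| ≤ ε' * |x - y| := by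
      have := hz1.1
      rwa [abs_sub_comm y x] at this
    have keyψ1 : |ψ y - ψ x - (y - x) * g x| ≤ ε' * |x - y| := by
      have := hz1.2
      rwa [abs_sub_comm y x] at this
    have keyψ2 : |ψ (y + α * (x - y)) - ψ x - ((y + α * (x - y)) - x) * g x| ≤
        ε' * ((1 + α) * |x - y|) := by
      have hzz := hz2.2
      have he : |y + α * (x - y) - x| ≤ (1 + α) * |x - y| := by
        have hh : y + α * (x - y) - x = (1 - α) * (y - x) := by ring
        rw [hh, abs_mul, abs_sub_comm y x]
        exact mul_le_mul_of_nonneg_right (abs_le.2 ⟨by linarith, by linarith⟩) (abs_nonneg _)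
      calc |ψ (y + α * (x - y)) - ψ x - ((y + α * (x - y)) - x) * g x| ≤
            ε' * |y + α * (x - y) - x| := hzz
        _ ≤ ε' * ((1 + α) * |x - y|) := mul_le_mul_of_nonneg_left he hε'pos.le
    have key2 : |ψ (y + α * (x - y)) - ψ y| ≤
        α * g x * |x - y| + ε' * (2 + α) * |x - y| := by
      have iden : ψ (y + α * (x - y)) - ψ y =
          (ψ (y + α * (x - y)) - ψ x - ((y + α * (x - y)) - x) * g x) -
          (ψ y - ψ x - (y - x) * g x) + α * (x - y) * g x := by ring
      have habs : |ψ (y + α * (x - y)) - ψ y| ≤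
          |ψ (y + α * (x - y)) - ψ x - ((y + α * (x - y)) - x) * g x| +
          |ψ y - ψ x - (y - x) * g x| + |α * (x - y) * g x| := by
        rw [iden]
        refine le_trans (abs_add_le _ _) ?_
        have h5 := abs_sub (ψ (y + α * (x - y)) - ψ x - ((y + α * (x - y)) - x) * g x)
          (ψ y - ψ x - (y - x) * g x)
        linarith
      have habs2 : |α * (x - y) * g x| = α * g x * |x - y| := by
        rw [abs_mul, abs_mul, abs_of_pos hα, abs_of_nonneg (hg0 x)]; ring
      have hexp : ε' * ((1 + α) * |x - y|) + ε' * |x - y| = ε' * (2 + α) * |x - y| := by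
        ring
      linarith only [habs, keyψ1, keyψ2, habs2, hexp]
    -- assemble
    have i2 : |F x - F y| ≤ |ψ (y + α * (x - y)) - ψ y| + C * |x - y| := by
      have t2' : |f y * (x - y)| ≤ C * |x - y| := by
        rw [abs_mul]
        exact mul_le_mul_of_nonneg_right hfyC (abs_nonneg _)
      have h5 := abs_add_le (F x - F y - f y * (x - y)) (f y * (x - y))
      rw [show F x - F y - f y * (x - y) + f y * (x - y) = F x - F y by ring] at h5
      calc |F x - F y| ≤ |F x - F y - f y * (x - y)| + |f y * (x - y)| := h5
        _ ≤ _ := add_le_add h4 t2'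
    have i1 : |f x * (x - y)| ≤ ε' * |x - y| + |F x - F y| := by
      have t1' : |F x - F y - f x * (x - y)| ≤ ε' * |x - y| := by
        have he : F x - F y - f x * (x - y) = -(F y - F x - f x * (y - x)) := by ring
        rw [he, abs_neg]
        exact key1
      have h5 := abs_sub (F x - F y) (F x - F y - f x * (x - y))
      rw [show F x - F y - (F x - F y - f x * (x - y)) = f x * (x - y) by ring] at h5
      linarith
    have main : |f x| * |x - y| ≤ (C + α * g x + ε' * (3 + α)) * |x - y| := by
      rw [← abs_mul]
      calc |f x * (x - y)| ≤ ε' * |x - y| + |F x - F y| := i1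
        _ ≤ ε' * |x - y| + (|ψ (y + α * (x - y)) - ψ y| + C * |x - y|) := by linarith
        _ ≤ ε' * |x - y| + ((α * g x * |x - y| + ε' * (2 + α) * |x - y|) + C * |x - y|) := by
            linarith
        _ = (C + α * g x + ε' * (3 + α)) * |x - y| := by ring
    have hfle : |f x| ≤ C + α * g x + ε' * (3 + α) :=
      le_of_mul_le_mul_right main hxypos
    have hfin : ε' * (3 + α) = ε := by
      rw [hε'def, div_mul_cancel₀ _ (by positivity : (0:ℝ) < 3 + α).ne']
    linarith
  -- integrability on Ioo u v
  have hIoo : IntegrableOn f (Ioo u v) := by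
    have hfin : hψmono.stieltjesFunction.measure (Ioo u v) < ⊤ :=
      lt_of_le_of_lt (measure_mono Ioo_subset_Icc_self)
        ((isCompact_Icc (a := u) (b := v)).measure_lt_top)
    have hgmeas : Measurable g := by
      rw [hgdef]; exact (Measure.measurable_rnDeriv _ _).ennreal_toReal
    have hgint : IntegrableOn g (Ioo u v) := by
      refine ⟨hgmeas.aestronglyMeasurable, ?_⟩
      rw [hasFiniteIntegral_iff_norm]
      calc ∫⁻ t in Ioo u v, ENNReal.ofReal ‖g t‖ ∂volume
          ≤ ∫⁻ t in Ioo u v, Measure.rnDeriv hψmono.stieltjesFunction.measure volume t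
            ∂volume := by
            apply lintegral_mono
            intro t
            show ENNReal.ofReal ‖g t‖ ≤
              Measure.rnDeriv hψmono.stieltjesFunction.measure volume t
            rw [Real.norm_eq_abs, abs_of_nonneg (hg0 t), hgdef]
            exact ENNReal.ofReal_toReal_le
        _ ≤ hψmono.stieltjesFunction.measure (Ioo u v) :=
            Measure.setLIntegral_rnDeriv_le _
        _ < ⊤ := hfin
    have hvol : volume (Ioo u v) < ⊤ := by
      rw [Real.volume_Ioo]; exact ENNReal.ofReal_lt_top
    have hbound : IntegrableOn (fun t => C + α * g t) (Ioo u v) :=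
      (integrableOn_const hvol.ne).add (hgint.const_mul α)
    have hae1 : ∀ᵐ t ∂(volume.restrict (Ioo u v)), t ∈ Ioo u v :=
      ae_restrict_mem measurableSet_Ioo
    have hae2 : ∀ᵐ t ∂(volume.restrict (Ioo u v)), HasDerivAt ψ (g t) t :=
      ae_restrict_of_ae hgae
    have haekey : ∀ᵐ t ∂(volume.restrict (Ioo u v)),
        HasDerivAt F (f t) t ∧ |f t| ≤ C + α * g t := by
      filter_upwards [hae1, hae2] with t h1 h2
      exact hkey t h1 h2
    have haem : AEStronglyMeasurable f (volume.restrict (Ioo u v)) := by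
      have heq : f =ᵐ[volume.restrict (Ioo u v)] deriv F := by
        filter_upwards [haekey] with t ht
        exact (ht.1.deriv).symm
      exact ((measurable_deriv F).aestronglyMeasurable).congr heq.symm
    apply Integrable.mono' hbound haem
    filter_upwards [haekey] with t ht
    rw [Real.norm_eq_abs]
    exact ht.2
  refine ⟨u, v, huv, hUV2.trans hIcc, ?_⟩
  have hres : volume.restrict (Ioo u v) = volume.restrict (Icc u v) :=
    Measure.restrict_congr_set Ioo_ae_eq_Icc
  rw [IntegrableOn, ← hres]
  exact hIoo
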